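/- Let α be an ordinal of uncountable cofinality and f an additive coloring of α by a finite set T of n colors. Then there exist a club J ⊆ α and partitions J = J₁ ∪ … ∪ J_{|T|} = J¹ ∪ … ∪ J^{|T|} (the J_k pairwise disjoint, the J^ℓ pairwise disjoint) and colors t_k^ℓ ∈ T such that for all a < b in J with a ∈ J_k and b ∈ J^ℓ, f(a,b) = t_k^ℓ. -/

import Mathlib

namespace ShelahAux

open Set Order

universe u

variable {T : Type}

/-- The additivity hypothesis, abbreviated. -/
def Additive (α : Ordinal.{u}) (f : Ordinal.{u} → Ordinal.{u} → T) : Prop :=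
  ∀ x₁ y₁ z₁ x₂ y₂ z₂ : Ordinal,
      x₁ < y₁ → y₁ < z₁ → z₁ < α → x₂ < y₂ → y₂ < z₂ → z₂ < α →
      f x₁ y₁ = f x₂ y₂ → f y₁ z₁ = f y₂ z₂ → f x₁ z₁ = f x₂ z₂

/-- `a` and `b` eventually agree: there is a common witness `c` above both where
`f a c = f b c`. -/
def Eqv (α : Ordinal.{u}) (f : Ordinal.{u} → Ordinal.{u} → T) (a b : Ordinal.{u}) : Prop :=
  ∃ c, a < c ∧ b < c ∧ c < α ∧ f a c = f b c

/-- `b` decides all eventual agreements among pairs below `x`. -/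
def P (α : Ordinal.{u}) (f : Ordinal.{u} → Ordinal.{u} → T) (x b : Ordinal.{u}) : Prop :=
  ∀ a a', a < a' → a' < x → Eqv α f a a' → f a b = f a' b

def W (α : Ordinal.{u}) (f : Ordinal.{u} → Ordinal.{u} → T) (x : Ordinal.{u}) :
    Set Ordinal.{u} :=
  {b | x ≤ b ∧ b < α ∧ P α f x b}

noncomputable def w (α : Ordinal.{u}) (f : Ordinal.{u} → Ordinal.{u} → T) (x : Ordinal.{u}) :
    Ordinal.{u} :=
  sInf (W α f x)

theorem succ_self (o : Ordinal.{u}) : o < o + 1 := by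
  rw [Ordinal.add_one_eq_succ]; exact Order.lt_succ o

theorem succ_lt' {α o : Ordinal.{u}} (h : Order.IsSuccLimit α) (ho : o < α) : o + 1 < α := by
  rw [Ordinal.add_one_eq_succ]; exact h.succ_lt ho

theorem eqv_refl {α : Ordinal.{u}} {f : Ordinal.{u} → Ordinal.{u} → T} (hlim : Order.IsSuccLimit α)
    {a : Ordinal.{u}} (ha : a < α) : Eqv α f a a :=
  ⟨a + 1, succ_self a, succ_self a, succ_lt' hlim ha, rfl⟩

theorem eqv_symm {α : Ordinal.{u}} {f : Ordinal.{u} → Ordinal.{u} → T} {a b : Ordinal.{u}}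
    (h : Eqv α f a b) : Eqv α f b a := by
  obtain ⟨c, h1, h2, h3, h4⟩ := h
  exact ⟨c, h2, h1, h3, h4.symm⟩

theorem eqv_trans {α : Ordinal.{u}} {f : Ordinal.{u} → Ordinal.{u} → T}
    (hadd : Additive α f) (hlim : Order.IsSuccLimit α) {a b c : Ordinal.{u}}
    (h1 : Eqv α f a b) (h2 : Eqv α f b c) : Eqv α f a c := by
  obtain ⟨c1, hac1, hbc1, hc1α, he1⟩ := h1
  obtain ⟨c2, hbc2, hcc2, hc2α, he2⟩ := h2
  have hdα : max c1 c2 + 1 < α := succ_lt' hlim (max_lt hc1α hc2α)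
  have hc1d : c1 < max c1 c2 + 1 := (le_max_left _ _).trans_lt (succ_self _)
  have hc2d : c2 < max c1 c2 + 1 := (le_max_right _ _).trans_lt (succ_self _)
  have hd1 : f a (max c1 c2 + 1) = f b (max c1 c2 + 1) :=
    hadd a c1 _ b c1 _ hac1 hc1d hdα hbc1 hc1d hdα he1 rfl
  have hd2 : f b (max c1 c2 + 1) = f c (max c1 c2 + 1) :=
    hadd b c2 _ c c2 _ hbc2 hc2d hdα hcc2 hc2d hdα he2 rfl
  exact ⟨max c1 c2 + 1, hac1.trans hc1d, hcc2.trans hc2d, hdα, hd1.trans hd2⟩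

theorem W_nonempty [Finite T] {α : Ordinal.{u}} {f : Ordinal.{u} → Ordinal.{u} → T}
    (hadd : Additive α f) (hlim : Order.IsSuccLimit α) {x : Ordinal.{u}} (hx : x < α) :
    (W α f x).Nonempty := by
  classical
  set R : Ordinal.{u} → Set T := fun b => (fun u => f u b) '' Iio x with hR
  set N : Ordinal.{u} → ℕ := fun b => (R b).ncard with hN
  set S : Set ℕ := {k | ∃ b, x ≤ b ∧ b < α ∧ N b = k} with hS
  have hSne : S.Nonempty := ⟨N x, x, le_rfl, hx, rfl⟩
  obtain ⟨b0, hxb0, hb0α, hNb0⟩ := Nat.sInf_mem hSne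
  refine ⟨b0, hxb0, hb0α, ?_⟩
  intro a a' haa' ha'x hE
  obtain ⟨cw, hacw, ha'cw, hcwα, hfc⟩ := hE
  set d : Ordinal.{u} := max b0 cw + 1 with hd
  have hdα : d < α := succ_lt' hlim (max_lt hb0α hcwα)
  have hb0d : b0 < d := (le_max_left _ _).trans_lt (succ_self _)
  have hcwd : cw < d := (le_max_right _ _).trans_lt (succ_self _)
  have coar : ∀ u u', u < x → u' < x → f u b0 = f u' b0 → f u d = f u' d := by
    intro u u' hu hu' h
    exact hadd u b0 d u' b0 d (hu.trans_le hxb0) hb0d hdα (hu'.trans_le hxb0) hb0d hdα h rfl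
  set φ : T → T := fun s => if h : ∃ u, u < x ∧ f u b0 = s then f (Classical.choose h) d else s
    with hφdef
  have hφ : ∀ u, u < x → φ (f u b0) = f u d := by
    intro u hu
    have h : ∃ u', u' < x ∧ f u' b0 = f u b0 := ⟨u, hu, rfl⟩
    have hc := Classical.choose_spec h
    simp only [hφdef, dif_pos h]
    exact coar _ u hc.1 hu hc.2
  have himg : R d = φ '' R b0 := by
    ext s
    constructor
    · rintro ⟨u, hu, rfl⟩
      exact ⟨f u b0, ⟨u, hu, rfl⟩, hφ u hu⟩
    · rintro ⟨s', ⟨u, hu, rfl⟩, rfl⟩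
      rw [hφ u hu]; exact ⟨u, hu, rfl⟩
  have hfinb0 : (R b0).Finite := Set.toFinite _
  have hNd_le : N d ≤ N b0 := by
    show (R d).ncard ≤ (R b0).ncard
    rw [himg]
    exact Set.ncard_image_le hfinb0
  have hNd_ge : sInf S ≤ N d := Nat.sInf_le ⟨d, hxb0.trans hb0d.le, hdα, rfl⟩
  have hNd : (φ '' R b0).ncard = (R b0).ncard := by
    rw [← himg]
    exact le_antisymm hNd_le (by show N b0 ≤ N d; rw [hNb0]; exact hNd_ge)
  have hinj : Set.InjOn φ (R b0) := Set.injOn_of_ncard_image_eq hNd hfinb0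
  have had : f a d = f a' d := hadd a cw d a' cw d hacw hcwd hdα ha'cw hcwd hdα hfc rfl
  have hax : a < x := haa'.trans ha'x
  have h1 : φ (f a b0) = f a d := hφ a hax
  have h2 : φ (f a' b0) = f a' d := hφ a' ha'x
  exact hinj ⟨a, hax, rfl⟩ ⟨a', ha'x, rfl⟩ (by rw [h1, h2, had])

theorem w_mem [Finite T] {α : Ordinal.{u}} {f : Ordinal.{u} → Ordinal.{u} → T}
    (hadd : Additive α f) (hlim : Order.IsSuccLimit α) {x : Ordinal.{u}} (hx : x < α) :
    w α f x ∈ W α f x :=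
  csInf_mem (W_nonempty hadd hlim hx)

theorem w_mono [Finite T] {α : Ordinal.{u}} {f : Ordinal.{u} → Ordinal.{u} → T}
    (hadd : Additive α f) (hlim : Order.IsSuccLimit α) {x x' : Ordinal.{u}} (hx' : x' ≤ x) (hx : x < α) :
    w α f x' ≤ w α f x := by
  refine csInf_le_csInf (OrderBot.bddBelow _) (W_nonempty hadd hlim hx) ?_
  intro b hb
  exact ⟨hx'.trans hb.1, hb.2.1, fun a a' h1 h2 h3 => hb.2.2 a a' h1 (h2.trans_le hx') h3⟩

/-- The key property of closure points of `w`. -/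
theorem key [Finite T] {α : Ordinal.{u}} {f : Ordinal.{u} → Ordinal.{u} → T}
    (hadd : Additive α f) (hlim : Order.IsSuccLimit α) {c a a' : Ordinal.{u}}
    (hcα : c < α) (hclim : Order.IsSuccLimit c) (hc : ∀ y < c, w α f y < c)
    (haa' : a < a') (ha'c : a' < c) (hE : Eqv α f a a') : f a c = f a' c := by
  have hxc : a' + 1 < c := by
    rw [Ordinal.add_one_eq_succ]; exact hclim.succ_lt ha'c
  have hxα : a' + 1 < α := hxc.trans hcα
  have hw := w_mem hadd hlim hxα
  have hb : f a (w α f (a' + 1)) = f a' (w α f (a' + 1)) :=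
    hw.2.2 a a' haa' (succ_self a') hE
  have hwc : w α f (a' + 1) < c := hc _ hxc
  have ha'w : a' < w α f (a' + 1) := (succ_self a').trans_le hw.1
  exact hadd a _ c a' _ c (haa'.trans ha'w) hwc hcα ha'w hwc hcα hb rfl

/-- Minimal elements of `Eqv`-classes. -/
def Mset (α : Ordinal.{u}) (f : Ordinal.{u} → Ordinal.{u} → T) : Set Ordinal.{u} :=
  {μ | μ < α ∧ ∀ y < μ, ¬ Eqv α f y μ}

noncomputable def mrep (α : Ordinal.{u}) (f : Ordinal.{u} → Ordinal.{u} → T)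
    (a : Ordinal.{u}) : Ordinal.{u} :=
  sInf {y | Eqv α f y a}

theorem mrep_eqv {α : Ordinal.{u}} {f : Ordinal.{u} → Ordinal.{u} → T} (hlim : Order.IsSuccLimit α)
    {a : Ordinal.{u}} (ha : a < α) : Eqv α f (mrep α f a) a := by
  have h : sInf {y | Eqv α f y a} ∈ {y | Eqv α f y a} :=
    csInf_mem ⟨a, eqv_refl hlim ha⟩
  exact h

theorem mrep_le {α : Ordinal.{u}} {f : Ordinal.{u} → Ordinal.{u} → T} (hlim : Order.IsSuccLimit α)
    {a : Ordinal.{u}} (ha : a < α) : mrep α f a ≤ a := by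
  exact csInf_le (OrderBot.bddBelow _) (show a ∈ {y | Eqv α f y a} from eqv_refl hlim ha)

theorem mrep_mem {α : Ordinal.{u}} {f : Ordinal.{u} → Ordinal.{u} → T}
    (hadd : Additive α f) (hlim : Order.IsSuccLimit α)
    {a : Ordinal.{u}} (ha : a < α) : mrep α f a ∈ Mset α f := by
  refine ⟨(mrep_le hlim ha).trans_lt ha, fun y hy hE => ?_⟩
  have : y ∈ {y | Eqv α f y a} := eqv_trans hadd hlim hE (mrep_eqv hlim ha)
  exact absurd (csInf_le (OrderBot.bddBelow _) this) (not_le.mpr hy)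

theorem Mset_antichain {α : Ordinal.{u}} {f : Ordinal.{u} → Ordinal.{u} → T}
    {μ μ' : Ordinal.{u}} (hμ : μ ∈ Mset α f) (hμ' : μ' ∈ Mset α f)
    (hE : Eqv α f μ μ') : μ = μ' := by
  rcases lt_trichotomy μ μ' with h | h | h
  · exact absurd hE (hμ'.2 μ h)
  · exact h
  · exact absurd (eqv_symm hE) (hμ.2 μ' h)

theorem Mset_bdd [Finite T] {α : Ordinal.{u}} {f : Ordinal.{u} → Ordinal.{u} → T}
    (hadd : Additive α f) (hlim : Order.IsSuccLimit α) :
    ∃ a', a' < α ∧ ∀ μ ∈ Mset α f, μ < a' := by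
  classical
  have hfin : (Mset α f).Finite := by
    by_contra hinf
    have hinf' : (Mset α f).Infinite := hinf
    letI : Fintype T := Fintype.ofFinite T
    set g := hinf'.natEmbedding with hg
    set h : Fin (Nat.card T + 1) → Ordinal.{u} := fun i => (g i.1 : Ordinal.{u}) with hh
    have hhM : ∀ i, h i ∈ Mset α f := fun i => (g i.1).2
    have hinjh : Function.Injective h := by
      intro i j hij
      exact Fin.ext (g.injective (Subtype.ext hij))
    set b : Ordinal.{u} := (Finset.univ.sup h) + 1 with hb
    have hsup : Finset.univ.sup h < α := by
      rw [Finset.sup_lt_iff (by simpa using hlim.pos)]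
      exact fun i _ => (hhM i).1
    have hbα : b < α := succ_lt' hlim hsup
    have hib : ∀ i, h i < b := fun i => (Finset.le_sup (Finset.mem_univ i)).trans_lt (succ_self _)
    obtain ⟨i, j, hij, heq⟩ := Fintype.exists_ne_map_eq_of_card_lt (fun i => f (h i) b)
      (by simp [Nat.card_eq_fintype_card])
    have hE : Eqv α f (h i) (h j) := ⟨b, hib i, hib j, hbα, heq⟩
    exact hij (hinjh (Mset_antichain (hhM i) (hhM j) hE))
  have hne : (Mset α f).Nonempty := ⟨mrep α f 0, mrep_mem hadd hlim hlim.pos⟩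
  have hmem := Set.Nonempty.csSup_mem hne hfin
  refine ⟨sSup (Mset α f) + 1, succ_lt' hlim hmem.1, fun μ hμ => ?_⟩
  exact (le_csSup hfin.bddAbove hμ).trans_lt (succ_self _)

end ShelahAux

open ShelahAux in
/-- (Shelah, Conclusion 1.2.) If `α` has uncountable cofinality and `f` is an additive
coloring of `α` by a finite set `T`, then there is a club `J ⊆ α` together with
partitions `J = ⋃ₖ Jₖ = ⋃ˡ Jˡ` and colors `t k l` such that `f a b = t k l` whenever
`a < b` are in `J` with `a ∈ Jₖ`, `b ∈ Jˡ`. -/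
theorem additive_coloring_club_double_partition
    (α : Ordinal) (hα : Cardinal.aleph0 < α.cof)
    (T : Type) [Finite T] (f : Ordinal → Ordinal → T)
    (hadd : ∀ x₁ y₁ z₁ x₂ y₂ z₂ : Ordinal,
      x₁ < y₁ → y₁ < z₁ → z₁ < α → x₂ < y₂ → y₂ < z₂ → z₂ < α →
      f x₁ y₁ = f x₂ y₂ → f y₁ z₁ = f y₂ z₂ → f x₁ z₁ = f x₂ z₂) :
    ∃ J : Set Ordinal, J ⊆ Set.Iio α ∧
      (∀ β < α, ∃ x ∈ J, β < x) ∧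
      (∀ x < α, Order.IsSuccLimit x → (∀ y < x, ∃ z ∈ J, y < z ∧ z < x) → x ∈ J) ∧
      ∃ A B : Fin (Nat.card T) → Set Ordinal,
        ∃ t : Fin (Nat.card T) → Fin (Nat.card T) → T,
          (⋃ k, A k) = J ∧ (⋃ l, B l) = J ∧
          (∀ k k', k ≠ k' → A k ∩ A k' = ∅) ∧
          (∀ l l', l ≠ l' → B l ∩ B l' = ∅) ∧
          ∀ a ∈ J, ∀ b ∈ J, a < b → ∀ k l, a ∈ A k → b ∈ B l → f a b = t k l := by
  classical
  have hadd' : Additive α f := hadd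
  have hlim : Order.IsSuccLimit α := Ordinal.aleph0_le_cof.mp hα.le
  obtain ⟨astar, hastarα, hastar⟩ := Mset_bdd hadd' hlim
  set e : T ≃ Fin (Nat.card T) := Finite.equivFin T with he
  set J : Set Ordinal := {c | astar < c ∧ c < α ∧ Order.IsSuccLimit c ∧ ∀ y < c, w α f y < c} with hJ
  have hJsub : J ⊆ Set.Iio α := fun c hc => hc.2.1
  have hJunb : ∀ β < α, ∃ x ∈ J, β < x := by
    intro β hβ
    set seq : ℕ → Ordinal := fun nn =>
      Nat.rec (max β astar + 1) (fun _ s => max (w α f s) s + 1) nn with hseqdef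
    have hseqα : ∀ nn, seq nn < α := by
      intro nn
      induction nn with
      | zero => exact succ_lt' hlim (max_lt hβ hastarα)
      | succ k ih =>
        have hwk : w α f (seq k) < α := (w_mem hadd' hlim ih).2.1
        exact succ_lt' hlim (max_lt hwk ih)
    have hmono : ∀ nn, seq nn < seq (nn + 1) := fun nn =>
      (le_max_right _ _).trans_lt (succ_self _)
    have hwlt : ∀ nn, w α f (seq nn) < seq (nn + 1) := fun nn =>
      (le_max_left _ _).trans_lt (succ_self _)
    set c : Ordinal := ⨆ nn, seq nn with hc
    have hcα : c < α := by
      refine Ordinal.iSup_lt_ord_lift ?_ hseqα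
      simpa using hα
    have hle : ∀ nn, seq nn ≤ c := Ordinal.le_iSup seq
    have hlt : ∀ nn, seq nn < c := fun nn => (hmono nn).trans_le (hle (nn + 1))
    have hexlt : ∀ y, y < c → ∃ nn, y < seq nn := fun y hy => Ordinal.lt_iSup_iff.mp hy
    have hc0 : astar < seq 0 := (le_max_right _ _).trans_lt (succ_self _)
    have hβ0 : β < seq 0 := (le_max_left _ _).trans_lt (succ_self _)
    refine ⟨c, ⟨hc0.trans (hlt 0), hcα, ?_, ?_⟩, hβ0.trans (hlt 0)⟩
    · rw [Ordinal.isSuccLimit_iff, Order.isSuccPrelimit_iff_succ_lt]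
      constructor
      · exact fun h0 => absurd (h0 ▸ hlt 0) (by simp [not_lt_zero])
      · intro y hy
        obtain ⟨nn, hnn⟩ := hexlt y hy
        have : Order.succ y ≤ seq nn := Order.succ_le_of_lt hnn
        exact this.trans_lt (hlt nn)
    · intro y hy
      obtain ⟨nn, hnn⟩ := hexlt y hy
      have h1 : w α f y ≤ w α f (seq nn) := w_mono hadd' hlim hnn.le (hseqα nn)
      exact (h1.trans_lt (hwlt nn)).trans_le (hle (nn + 1))
  have hJcl : ∀ x < α, Order.IsSuccLimit x → (∀ y < x, ∃ z ∈ J, y < z ∧ z < x) → x ∈ J := by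
    intro x hxα hxlim hub
    obtain ⟨z, hzJ, _, hzx⟩ := hub 0 hxlim.pos
    refine ⟨hzJ.1.trans hzx, hxα, hxlim, ?_⟩
    intro y hy
    obtain ⟨z', hz'J, hyz', hz'x⟩ := hub y hy
    exact (hz'J.2.2.2 y hyz').trans hz'x
  refine ⟨J, hJsub, hJunb, hJcl, ?_⟩
  set A : Fin (Nat.card T) → Set Ordinal :=
    fun k => {a | a ∈ J ∧ e (f (mrep α f a) astar) = k} with hA
  set B : Fin (Nat.card T) → Set Ordinal :=
    fun l => {b | b ∈ J ∧ e (f astar b) = l} with hB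
  have homog : ∀ a ∈ J, ∀ b ∈ J, ∀ a' ∈ J, ∀ b' ∈ J, a < b → a' < b' →
      f (mrep α f a) astar = f (mrep α f a') astar → f astar b = f astar b' →
      f a b = f a' b' := by
    intro a haJ b hbJ a' ha'J b' hb'J hab ha'b' hAeq hBeq
    have haα : a < α := haJ.2.1
    have ha'α : a' < α := ha'J.2.1
    have hrM : mrep α f a ∈ Mset α f := mrep_mem hadd' hlim haα
    have hr'M : mrep α f a' ∈ Mset α f := mrep_mem hadd' hlim ha'α
    have hrs : mrep α f a < astar := hastar _ hrM
    have hr's : mrep α f a' < astar := hastar _ hr'M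
    have hrr' : mrep α f a = mrep α f a' :=
      Mset_antichain hrM hr'M ⟨astar, hrs, hr's, hastarα, hAeq⟩
    have step1 : ∀ u ∈ J, ∀ v ∈ J, u < v → f u v = f (mrep α f u) v := by
      intro u huJ v hvJ huv
      rcases eq_or_lt_of_le (mrep_le hlim huJ.2.1) with heq | hlt
      · rw [heq]
      · exact (key hadd' hlim hvJ.2.1 hvJ.2.2.1 hvJ.2.2.2 hlt (huv)
          (mrep_eqv hlim huJ.2.1)).symm
    have h1 : f a b = f (mrep α f a) b := step1 a haJ b hbJ hab
    have h3 : f a' b' = f (mrep α f a') b' := step1 a' ha'J b' hb'J ha'b'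
    have h2 : f (mrep α f a) b = f (mrep α f a) b' :=
      hadd _ astar b _ astar b' hrs hbJ.1 hbJ.2.1 hrs hb'J.1 hb'J.2.1 rfl hBeq
    rw [h1, h2, h3, hrr']
  set t : Fin (Nat.card T) → Fin (Nat.card T) → T := fun k l =>
    if h : ∃ p : Ordinal × Ordinal, p.1 ∈ A k ∧ p.2 ∈ B l ∧ p.1 < p.2
    then f h.choose.1 h.choose.2 else f 0 0 with ht
  refine ⟨A, B, t, ?_, ?_, ?_, ?_, ?_⟩
  · ext a
    simp only [Set.mem_iUnion]
    exact ⟨fun ⟨k, hk⟩ => hk.1, fun ha => ⟨e (f (mrep α f a) astar), ha, rfl⟩⟩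
  · ext b
    simp only [Set.mem_iUnion]
    exact ⟨fun ⟨l, hl⟩ => hl.1, fun hb => ⟨e (f astar b), hb, rfl⟩⟩
  · intro k k' hkk'
    ext a
    simp only [Set.mem_inter_iff, Set.mem_empty_iff_false, iff_false, not_and]
    intro ha ha'
    exact absurd (ha.2.symm.trans ha'.2) hkk'
  · intro l l' hll'
    ext b
    simp only [Set.mem_inter_iff, Set.mem_empty_iff_false, iff_false, not_and]
    intro hb hb'
    exact absurd (hb.2.symm.trans hb'.2) hll'
  · intro a haJ b hbJ hab k l haA hbB
    have hex : ∃ p : Ordinal × Ordinal, p.1 ∈ A k ∧ p.2 ∈ B l ∧ p.1 < p.2 :=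
      ⟨(a, b), haA, hbB, hab⟩
    have hspec := hex.choose_spec
    have htval : t k l = f hex.choose.1 hex.choose.2 := by
      rw [ht]; exact dif_pos hex
    rw [htval]
    refine homog a haJ b hbJ hex.choose.1 hspec.1.1 hex.choose.2 hspec.2.1.1 hab hspec.2.2
      ?_ ?_
    · exact e.injective (haA.2.trans hspec.1.2.symm)
    · exact e.injective (hbB.2.trans hspec.2.1.2.symm)
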